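/- arXiv:1006.0302 — 3 statements merged into one kernel-verified Lean document; each statement's English description precedes it below -/
import Mathlib

section
/- For strictly positive density matrices ρ and σ, the quantity F_min(ρ,σ), defined as the supremum of the classical fidelity F(p,q) = Σ_x √(p(x)q(x)) over all triples (Φ, p, q) where Φ is a completely positive trace-preserving map sending probability distribution p to ρ and q to σ, equals tr(ρ √(ρ^{-1/2} σ ρ^{-1/2})). -/
open Matrix BigOperators
open scoped ComplexOrder Classical

noncomputable def msqrt {n : Type*} [Fintype n] [DecidableEq n]
    (A : Matrix n n ℂ) : Matrix n n ℂ :=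
  if h : A.PosSemidef then (h.1.eigenvectorUnitary : Matrix n n ℂ) *
    diagonal ((↑) ∘ Real.sqrt ∘ h.1.eigenvalues) * (star h.1.eigenvectorUnitary : Matrix n n ℂ)
  else 0

noncomputable def gm {n : Type*} [Fintype n] [DecidableEq n]
    (A B : Matrix n n ℂ) : Matrix n n ℂ :=
  msqrt A * msqrt ((msqrt A)⁻¹ * B * (msqrt A)⁻¹) * msqrt A

def IsDensity {n : Type*} [Fintype n] (ρ : Matrix n n ℂ) : Prop :=
  ρ.PosSemidef ∧ ρ.trace = 1

structure IsReverseTest {d m : ℕ} (ρ σ : Matrix (Fin d) (Fin d) ℂ)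
    (R : Fin m → Matrix (Fin d) (Fin d) ℂ) (p q : Fin m → ℝ) : Prop where
  states : ∀ x, IsDensity (R x)
  p_nonneg : ∀ x, 0 ≤ p x
  q_nonneg : ∀ x, 0 ≤ q x
  p_sum : ∑ x, p x = 1
  q_sum : ∑ x, q x = 1
  rho_eq : ∑ x, (p x : ℂ) • R x = ρ
  sigma_eq : ∑ x, (q x : ℂ) • R x = σ

noncomputable def Fmin {d : ℕ} (ρ σ : Matrix (Fin d) (Fin d) ℂ) : ℝ :=
  sSup {r : ℝ | ∃ (m : ℕ) (R : Fin m → Matrix (Fin d) (Fin d) ℂ) (p q : Fin m → ℝ),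
    IsReverseTest ρ σ R p q ∧ r = ∑ x, Real.sqrt (p x * q x)}

noncomputable def Dmax {d : ℕ} (ρ σ : Matrix (Fin d) (Fin d) ℂ) : ℝ :=
  sInf {r : ℝ | ∃ (m : ℕ) (R : Fin m → Matrix (Fin d) (Fin d) ℂ) (p q : Fin m → ℝ),
    IsReverseTest ρ σ R p q ∧ r = (∑ x, |p x - q x|) / 2}

noncomputable def choiMatrix {d e : ℕ}
    (Λ : Matrix (Fin d) (Fin d) ℂ →ₗ[ℂ] Matrix (Fin e) (Fin e) ℂ) :
    Matrix (Fin d × Fin e) (Fin d × Fin e) ℂ :=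
  Matrix.of fun pr qr => Λ (Matrix.single pr.1 qr.1 1) pr.2 qr.2

def IsCPTP {d e : ℕ}
    (Λ : Matrix (Fin d) (Fin d) ℂ →ₗ[ℂ] Matrix (Fin e) (Fin e) ℂ) : Prop :=
  (choiMatrix Λ).PosSemidef ∧ ∀ A, (Λ A).trace = A.trace

noncomputable def mcfc {n : Type*} [Fintype n] [DecidableEq n]
    (f : ℝ → ℝ) (A : Matrix n n ℂ) : Matrix n n ℂ :=
  if h : A.IsHermitian then h.cfc f else 0

def IsOperatorMonotoneOnNonneg (f : ℝ → ℝ) : Prop :=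
  ∀ (d : ℕ) (A B : Matrix (Fin d) (Fin d) ℂ), A.PosSemidef → B.PosSemidef →
    (B - A).PosSemidef → (mcfc f B - mcfc f A).PosSemidef

noncomputable def traceNorm {n : Type*} [Fintype n] [DecidableEq n]
    (A : Matrix n n ℂ) : ℝ :=
  ((msqrt (Aᴴ * A)).trace).re

set_option linter.unusedSectionVars false
set_option maxHeartbeats 1600000

section MyHelpers
variable {n : Type*} [Fintype n] [DecidableEq n]

namespace Matrix.PosSemidef

noncomputable def sqrt {A : Matrix n n ℂ} (h : A.PosSemidef) : Matrix n n ℂ :=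
  (h.1.eigenvectorUnitary : Matrix n n ℂ) *
    diagonal ((↑) ∘ Real.sqrt ∘ h.1.eigenvalues) * (star h.1.eigenvectorUnitary : Matrix n n ℂ)

open scoped MatrixOrder in
lemma sqrt_eq_cfcSqrt {A : Matrix n n ℂ} (hA : A.PosSemidef) : hA.sqrt = CFC.sqrt A := by
  rw [CFC.sqrt_eq_real_sqrt A hA.nonneg, cfcₙ_eq_cfc, hA.1.cfc_eq]
  rfl

open scoped MatrixOrder in
lemma sqrt_mul_self {A : Matrix n n ℂ} (hA : A.PosSemidef) : hA.sqrt * hA.sqrt = A := by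
  rw [sqrt_eq_cfcSqrt]
  exact CFC.sqrt_mul_sqrt_self A hA.nonneg

open scoped MatrixOrder in
lemma posSemidef_sqrt {A : Matrix n n ℂ} (hA : A.PosSemidef) : hA.sqrt.PosSemidef := by
  rw [sqrt_eq_cfcSqrt]
  exact (CFC.sqrt_nonneg A).posSemidef

open scoped MatrixOrder in
lemma eq_sqrt_of_sq_eq {A B : Matrix n n ℂ} (hA : A.PosSemidef) (hB : B.PosSemidef)
    (h : A ^ 2 = B) : A = hB.sqrt := by
  rw [sqrt_eq_cfcSqrt, ← h, CFC.sqrt_sq A hA.nonneg]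

end Matrix.PosSemidef

lemma herm_dot {A : Matrix n n ℂ} (hA : A.IsHermitian) (u v : n → ℂ) :
    star u ⬝ᵥ A *ᵥ v = star (star v ⬝ᵥ A *ᵥ u) := by
  rw [star_dotProduct]
  congr 1
  rw [star_mulVec, hA.eq, ← dotProduct_mulVec]

lemma sqrt_mono {A B : Matrix n n ℂ} (hA : A.PosSemidef) (hB : B.PosSemidef)
    (hAB : (B - A).PosSemidef) : (hB.sqrt - hA.sqrt).PosSemidef := by
  set SA := hA.sqrt with hSA
  set SB := hB.sqrt with hSB
  have hSAp : SA.PosSemidef := hA.posSemidef_sqrt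
  have hSBp : SB.PosSemidef := hB.posSemidef_sqrt
  have hS : (SB - SA).IsHermitian := hSBp.1.sub hSAp.1
  apply hS.posSemidef_iff_eigenvalues_nonneg.mpr
  intro i
  rw [Pi.zero_apply]
  set lam := hS.eigenvalues i with hlam
  set v : n → ℂ := ⇑(hS.eigenvectorBasis i) with hv
  have hvne : v ≠ 0 := by
    have := (hS.eigenvectorBasis).toBasis.ne_zero i
    simpa [hv, OrthonormalBasis.coe_toBasis] using
      fun h => this (by rw [OrthonormalBasis.coe_toBasis, h])
  have hev : (SB - SA) *ᵥ v = (lam : ℂ) • v := by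
    have h := hS.mulVec_eigenvectorBasis i
    ext k
    have := congrFun h k
    simpa [Complex.real_smul] using this
  have key : B - A = SB * (SB - SA) + (SB - SA) * SA := by
    have h1 : SB * SB = B := hB.sqrt_mul_self
    have h2 : SA * SA = A := hA.sqrt_mul_self
    rw [Matrix.mul_sub, Matrix.sub_mul, h1, h2]
    noncomm_ring
  have h0 : (0 : ℂ) ≤ star v ⬝ᵥ (B - A) *ᵥ v := hAB.dotProduct_mulVec_nonneg v
  rw [key] at h0
  have e1 : star v ⬝ᵥ (SB * (SB - SA)) *ᵥ v = (lam : ℂ) * (star v ⬝ᵥ SB *ᵥ v) := by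
    rw [← Matrix.mulVec_mulVec, hev, Matrix.mulVec_smul, dotProduct_smul]
    simp
  have e2 : star v ⬝ᵥ ((SB - SA) * SA) *ᵥ v = (lam : ℂ) * (star v ⬝ᵥ SA *ᵥ v) := by
    rw [← Matrix.mulVec_mulVec, dotProduct_mulVec]
    have : star v ᵥ* (SB - SA) = (lam : ℂ) • star v := by
      conv_lhs => rw [← hS.eq]
      rw [← star_mulVec, hev]
      ext k; simp [mul_comm]
    rw [this, smul_dotProduct, smul_eq_mul]
  rw [Matrix.add_mulVec, dotProduct_add, e1, e2, ← mul_add] at h0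
  by_cases hc : star v ⬝ᵥ SB *ᵥ v + star v ⬝ᵥ SA *ᵥ v = 0
  · have hz := (add_eq_zero_iff_of_nonneg (hSBp.dotProduct_mulVec_nonneg v) (hSAp.dotProduct_mulVec_nonneg v)).mp hc
    have hB0 : SB *ᵥ v = 0 := (hSBp.dotProduct_mulVec_zero_iff v).mp hz.1
    have hA0 : SA *ᵥ v = 0 := (hSAp.dotProduct_mulVec_zero_iff v).mp hz.2
    have : (lam : ℂ) • v = 0 := by
      rw [← hev, Matrix.sub_mulVec, hB0, hA0, sub_zero]
    rcases smul_eq_zero.mp this with h | h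
    · simp only [Complex.ofReal_eq_zero] at h; exact le_of_eq h.symm
    · exact absurd h hvne
  · have hcpos : (0:ℂ) < star v ⬝ᵥ SB *ᵥ v + star v ⬝ᵥ SA *ᵥ v :=
      lt_of_le_of_ne (add_nonneg (hSBp.dotProduct_mulVec_nonneg v) (hSAp.dotProduct_mulVec_nonneg v)) (Ne.symm hc)
    rw [Complex.pos_iff] at hcpos
    rw [Complex.nonneg_iff] at h0
    have hre := h0.1
    rw [Complex.mul_re, Complex.ofReal_re, Complex.ofReal_im] at hre
    simp only [zero_mul, sub_zero] at hre
    nlinarith [hcpos.1]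

lemma psd_diag_nonneg {M : Matrix n n ℂ} (hM : M.PosSemidef) (i : n) : 0 ≤ M i i := by
  have := hM.dotProduct_mulVec_nonneg (Pi.single i 1)
  simpa [dotProduct, Pi.single_apply, mulVec] using this

lemma psd_trace_nonneg {M : Matrix n n ℂ} (hM : M.PosSemidef) : 0 ≤ M.trace :=
  Finset.sum_nonneg fun i _ => psd_diag_nonneg hM i

lemma trace_mul_psd_nonneg {A B : Matrix n n ℂ} (hA : A.PosSemidef) (hB : B.PosSemidef) :
    0 ≤ (A * B).trace := by
  have h1 : A * B = hA.sqrt * (hA.sqrt * B) := by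
    rw [← Matrix.mul_assoc, hA.sqrt_mul_self]
  rw [h1, Matrix.trace_mul_comm, Matrix.mul_assoc, ← Matrix.mul_assoc]
  have : (hA.sqrt * B * hA.sqrt).PosSemidef := by
    have := hB.mul_mul_conjTranspose_same hA.sqrt
    rwa [hA.posSemidef_sqrt.1.eq] at this
  exact psd_trace_nonneg this

lemma smul_psd {M : Matrix n n ℂ} (hM : M.PosSemidef) {c : ℝ} (hc : 0 ≤ c) :
    ((c : ℂ) • M).PosSemidef := by
  refine PosSemidef.of_dotProduct_mulVec_nonneg ?_ ?_
  · unfold Matrix.IsHermitian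
    rw [conjTranspose_smul, hM.1.eq]
    congr 1
    simp
  · intro x
    rw [Matrix.smul_mulVec, dotProduct_smul, smul_eq_mul]
    exact mul_nonneg (by exact_mod_cast hc) (hM.dotProduct_mulVec_nonneg x)

lemma posDef_of_psd_invertible {M : Matrix n n ℂ} (hM : M.PosSemidef)
    (h : ∀ x, x ≠ 0 → M *ᵥ x ≠ 0) : M.PosDef := by
  refine PosDef.of_dotProduct_mulVec_pos hM.1 fun x hx => ?_
  have h1 : star x ⬝ᵥ M *ᵥ x ≠ 0 := fun h0 =>
    h x hx ((hM.dotProduct_mulVec_zero_iff x).mp h0)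
  exact lt_of_le_of_ne (hM.dotProduct_mulVec_nonneg x) (Ne.symm h1)

lemma sqrt_posDef {M : Matrix n n ℂ} (hM : M.PosDef) : (hM.posSemidef.sqrt).PosDef := by
  apply posDef_of_psd_invertible hM.posSemidef.posSemidef_sqrt
  intro x hx h0
  have : M *ᵥ x = 0 := by
    rw [← hM.posSemidef.sqrt_mul_self, ← Matrix.mulVec_mulVec, h0, Matrix.mulVec_zero]
  have h2 := hM.dotProduct_mulVec_pos hx
  rw [this, dotProduct_zero] at h2
  exact lt_irrefl 0 h2

lemma posDef_conj {M : Matrix n n ℂ} (hM : M.PosDef) {B : Matrix n n ℂ} (hB : IsUnit B) :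
    (Bᴴ * M * B).PosDef := by
  refine PosDef.of_dotProduct_mulVec_pos (isHermitian_conjTranspose_mul_mul B hM.1) fun x hx => ?_
  have hBx : B *ᵥ x ≠ 0 :=
    (Matrix.mulVec_injective_iff_isUnit.mpr hB |>.ne_iff' (by simp)).2 hx
  have := hM.dotProduct_mulVec_pos hBx
  simpa only [star_mulVec, dotProduct_mulVec, vecMul_vecMul] using this

lemma outer_sum (W : Matrix n n ℂ) (c : n → ℂ) :
    ∑ i, c i • Matrix.vecMulVec (fun k => W k i) (fun k => star (W k i))
      = W * Matrix.diagonal c * Wᴴ := by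
  ext a b
  simp only [Matrix.sum_apply, Matrix.smul_apply, Matrix.vecMulVec_apply, smul_eq_mul,
    Matrix.mul_apply, Matrix.diagonal_apply, Matrix.conjTranspose_apply,
    mul_ite, mul_zero, Finset.sum_ite_eq', Finset.mem_univ, if_true]
  exact Finset.sum_congr rfl fun x _ => by ring

lemma star_dot_swap (w x : n → ℂ) : star x ⬝ᵥ w = star (star w ⬝ᵥ x) := by
  simp only [dotProduct, star_sum, star_mul', star_star, Pi.star_apply]
  exact Finset.sum_congr rfl fun i _ => mul_comm _ _

lemma outer_mulVec (w x : n → ℂ) :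
    Matrix.vecMulVec w (star w) *ᵥ x = (star w ⬝ᵥ x) • w := by
  ext k; simp [Matrix.mulVec, Matrix.vecMulVec_apply, dotProduct,
    Finset.mul_sum, mul_comm, mul_left_comm]

lemma outer_psd (w : n → ℂ) : (Matrix.vecMulVec w (star w)).PosSemidef := by
  refine PosSemidef.of_dotProduct_mulVec_nonneg ?_ ?_
  · ext a b; simp [Matrix.vecMulVec_apply, Matrix.conjTranspose_apply, mul_comm]
  · intro x
    rw [outer_mulVec, dotProduct_smul, star_dot_swap, smul_eq_mul, mul_comm]
    exact mul_star_self_nonneg _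
lemma outer_trace (w : n → ℂ) : (Matrix.vecMulVec w (star w)).trace = star w ⬝ᵥ w := by
  simp [Matrix.trace, Matrix.diag, Matrix.vecMulVec_apply, dotProduct, mul_comm]

lemma amgm_dot {R : Matrix n n ℂ} (hR : R.PosSemidef) (u v : n → ℂ) :
    (star u ⬝ᵥ R *ᵥ v).re ≤
      ((star u ⬝ᵥ R *ᵥ u).re + (star v ⬝ᵥ R *ᵥ v).re) / 2 := by
  have h0 : (0:ℂ) ≤ star (u - v) ⬝ᵥ R *ᵥ (u - v) := hR.dotProduct_mulVec_nonneg _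
  have hexp : star (u - v) ⬝ᵥ R *ᵥ (u - v)
      = star u ⬝ᵥ R *ᵥ u - star u ⬝ᵥ R *ᵥ v - star v ⬝ᵥ R *ᵥ u + star v ⬝ᵥ R *ᵥ v := by
    rw [star_sub, Matrix.mulVec_sub, sub_dotProduct, dotProduct_sub, dotProduct_sub]
    ring
  have hsym : (star v ⬝ᵥ R *ᵥ u).re = (star u ⬝ᵥ R *ᵥ v).re := by
    rw [herm_dot hR.1 v u]
    simp [Complex.star_def]
  have := (Complex.nonneg_iff.mp h0).1
  rw [hexp] at this
  simp only [Complex.add_re, Complex.sub_re] at this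
  linarith

lemma amgm_dot_scaled {R : Matrix n n ℂ} (hR : R.PosSemidef) (u v : n → ℂ)
    {a b : ℝ} (ha : 0 ≤ a) (hb : 0 ≤ b) :
    Real.sqrt (a * b) * (star u ⬝ᵥ R *ᵥ v).re ≤
      (a * (star u ⬝ᵥ R *ᵥ u).re + b * (star v ⬝ᵥ R *ᵥ v).re) / 2 := by
  have key := amgm_dot hR ((Real.sqrt a : ℂ) • u) ((Real.sqrt b : ℂ) • v)
  have e1 : star ((Real.sqrt a : ℂ) • u) ⬝ᵥ R *ᵥ ((Real.sqrt b : ℂ) • v)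
      = ((Real.sqrt (a * b) : ℝ) : ℂ) * (star u ⬝ᵥ R *ᵥ v) := by
    rw [star_smul, Matrix.mulVec_smul, dotProduct_smul, smul_dotProduct,
      Real.sqrt_mul ha]
    push_cast
    simp only [Complex.star_def, Complex.conj_ofReal, smul_eq_mul]
    ring
  have e2 : star ((Real.sqrt a : ℂ) • u) ⬝ᵥ R *ᵥ ((Real.sqrt a : ℂ) • u)
      = ((a:ℝ) : ℂ) * (star u ⬝ᵥ R *ᵥ u) := by
    rw [star_smul, Matrix.mulVec_smul, dotProduct_smul, smul_dotProduct]
    simp only [Complex.star_def, Complex.conj_ofReal, smul_eq_mul]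
    rw [← mul_assoc, ← Complex.ofReal_mul, Real.mul_self_sqrt ha]
  have e3 : star ((Real.sqrt b : ℂ) • v) ⬝ᵥ R *ᵥ ((Real.sqrt b : ℂ) • v)
      = ((b:ℝ) : ℂ) * (star v ⬝ᵥ R *ᵥ v) := by
    rw [star_smul, Matrix.mulVec_smul, dotProduct_smul, smul_dotProduct]
    simp only [Complex.star_def, Complex.conj_ofReal, smul_eq_mul]
    rw [← mul_assoc, ← Complex.ofReal_mul, Real.mul_self_sqrt hb]
  rw [e1, e2, e3] at key
  simpa only [Complex.mul_re, Complex.ofReal_re, Complex.ofReal_im, zero_mul,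
    sub_zero] using key

lemma sum_psd {m : ℕ} (f : Fin m → Matrix n n ℂ) (h : ∀ x, (f x).PosSemidef) :
    (∑ x, f x).PosSemidef :=
  Finset.sum_induction f _ (fun _ _ ha hb => ha.add hb) Matrix.PosSemidef.zero
    (fun x _ => h x)

lemma dot_sum_mulVec {m : ℕ} (u v : n → ℂ) (f : Fin m → Matrix n n ℂ) :
    star u ⬝ᵥ (∑ x, f x) *ᵥ v = ∑ x, star u ⬝ᵥ (f x) *ᵥ v := by
  have h : (∑ x, f x) *ᵥ v = ∑ x, f x *ᵥ v := by
    ext k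
    simp only [Matrix.mulVec, dotProduct, Matrix.sum_apply, Finset.sum_apply,
      Finset.sum_mul]
    exact Finset.sum_comm
  rw [h]
  simp only [dotProduct, Finset.sum_apply, Finset.mul_sum]
  exact Finset.sum_comm

theorem upper_bound {d m : ℕ} {ρ σ : Matrix (Fin d) (Fin d) ℂ}
    (hρ : ρ.PosDef) (hσ : σ.PosDef)
    {R : Fin m → Matrix (Fin d) (Fin d) ℂ} {p q : Fin m → ℝ}
    (hT : IsReverseTest ρ σ R p q) :
    ∑ x, Real.sqrt (p x * q x)
      ≤ ((ρ * msqrt ((msqrt ρ)⁻¹ * σ * (msqrt ρ)⁻¹)).trace).re := by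
  have hρpsd := hρ.posSemidef
  have hs_eq : msqrt ρ = hρpsd.sqrt := dif_pos hρpsd
  set s := hρpsd.sqrt with hsdef
  have hsPD : s.PosDef := sqrt_posDef hρ
  have hsH : sᴴ = s := hρpsd.posSemidef_sqrt.1
  have hss : s * s = ρ := hρpsd.sqrt_mul_self
  have hdet : IsUnit s.det := hsPD.det_pos.ne'.isUnit
  have hs1 : s * s⁻¹ = 1 := Matrix.mul_nonsing_inv s hdet
  have hs2 : s⁻¹ * s = 1 := Matrix.nonsing_inv_mul s hdet
  have hinvH : (s⁻¹)ᴴ = s⁻¹ := by rw [Matrix.conjTranspose_nonsing_inv, hsH]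
  have hρinv : ρ⁻¹ = s⁻¹ * s⁻¹ := by rw [← hss, Matrix.mul_inv_rev]
  have hρdet : IsUnit ρ.det := hρ.det_pos.ne'.isUnit
  set C := s⁻¹ * σ * s⁻¹ with hCdef
  have hCPD : C.PosDef := by
    have : IsUnit (s⁻¹) := (Matrix.isUnit_iff_isUnit_det _).mpr (s.isUnit_nonsing_inv_det hdet)
    have h2 := posDef_conj hσ this
    rwa [hinvH] at h2
  have hCpsd := hCPD.posSemidef
  have hY_eq : msqrt C = hCpsd.sqrt := dif_pos hCpsd
  set Y := hCpsd.sqrt with hYdef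
  have hYpsd : Y.PosSemidef := hCpsd.posSemidef_sqrt
  rw [hs_eq, ← hCdef, hY_eq]
  -- the classical-quantum matrix X
  set X : Matrix (Fin d) (Fin d) ℂ := ∑ x, (Real.sqrt (p x * q x) : ℂ) • R x with hXdef
  have hXpsd : X.PosSemidef := sum_psd _ fun x =>
    smul_psd (hT.states x).1 (Real.sqrt_nonneg _)
  -- step A : σ - X ρ⁻¹ X is PSD
  have hmain : (σ - X * ρ⁻¹ * X).PosSemidef := by
    refine PosSemidef.of_dotProduct_mulVec_nonneg ?_ ?_
    · have h1 : (Xᴴ * ρ⁻¹ * X).IsHermitian :=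
        isHermitian_conjTranspose_mul_mul X (hρpsd.inv).1
      rw [hXpsd.1.eq] at h1
      exact hσ.1.sub h1
    · intro v
      set u := ρ⁻¹ *ᵥ (X *ᵥ v) with hudef
      have hXv : X *ᵥ v = ρ *ᵥ u := by
        rw [hudef, Matrix.mulVec_mulVec, Matrix.mul_nonsing_inv ρ hρdet, Matrix.one_mulVec]
      set t := star u ⬝ᵥ ρ *ᵥ u with htdef
      have ht0 : (0:ℂ) ≤ t := hρpsd.dotProduct_mulVec_nonneg u
      have htim : t.im = 0 := (Complex.nonneg_iff.mp ht0).2.symm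
      have hquad : star v ⬝ᵥ (X * ρ⁻¹ * X) *ᵥ v = t := by
        have h1 : (X * ρ⁻¹ * X) *ᵥ v = X *ᵥ u := by
          rw [hudef, ← Matrix.mulVec_mulVec, ← Matrix.mulVec_mulVec]
        rw [h1, herm_dot hXpsd.1 v u, hXv, ← htdef]
        exact Complex.conj_eq_iff_im.mpr htim
      have htX : t = star u ⬝ᵥ X *ᵥ v := by rw [hXv, htdef]
      -- expansions
      have hA1 : t = ∑ x, (p x : ℂ) • (star u ⬝ᵥ R x *ᵥ u) := by
        rw [htdef, ← hT.rho_eq, dot_sum_mulVec]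
        exact Finset.sum_congr rfl fun x _ => by
          rw [Matrix.smul_mulVec, dotProduct_smul]
      have hA2 : t = ∑ x, (Real.sqrt (p x * q x) : ℂ) • (star u ⬝ᵥ R x *ᵥ v) := by
        rw [htX, hXdef, dot_sum_mulVec]
        exact Finset.sum_congr rfl fun x _ => by
          rw [Matrix.smul_mulVec, dotProduct_smul]
      have hA3 : star v ⬝ᵥ σ *ᵥ v = ∑ x, (q x : ℂ) • (star v ⬝ᵥ R x *ᵥ v) := by
        rw [← hT.sigma_eq, dot_sum_mulVec]
        exact Finset.sum_congr rfl fun x _ => by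
          rw [Matrix.smul_mulVec, dotProduct_smul]
      -- real parts
      have hre1 : t.re = ∑ x, p x * (star u ⬝ᵥ R x *ᵥ u).re := by
        rw [hA1, Complex.re_sum]
        exact Finset.sum_congr rfl fun x _ => by
          simp [smul_eq_mul, Complex.mul_re]
      have hre2 : t.re = ∑ x, Real.sqrt (p x * q x) * (star u ⬝ᵥ R x *ᵥ v).re := by
        rw [hA2, Complex.re_sum]
        exact Finset.sum_congr rfl fun x _ => by
          simp [smul_eq_mul, Complex.mul_re]
      have hre3 : (star v ⬝ᵥ σ *ᵥ v).re = ∑ x, q x * (star v ⬝ᵥ R x *ᵥ v).re := by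
        rw [hA3, Complex.re_sum]
        exact Finset.sum_congr rfl fun x _ => by
          simp [smul_eq_mul, Complex.mul_re]
      -- per-term AM-GM
      have hbound : t.re ≤ ((∑ x, p x * (star u ⬝ᵥ R x *ᵥ u).re)
          + (∑ x, q x * (star v ⬝ᵥ R x *ᵥ v).re)) / 2 := by
        rw [hre2, ← Finset.sum_add_distrib, Finset.sum_div]
        exact Finset.sum_le_sum fun x _ =>
          amgm_dot_scaled (hT.states x).1 u v (hT.p_nonneg x) (hT.q_nonneg x)
      rw [← hre1, ← hre3] at hbound
      have hfin : t.re ≤ (star v ⬝ᵥ σ *ᵥ v).re := by linarith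
      rw [Matrix.sub_mulVec, dotProduct_sub, hquad]
      rw [Complex.nonneg_iff]
      constructor
      · simpa [Complex.sub_re] using hfin
      · have him : (star v ⬝ᵥ σ *ᵥ v).im = 0 := (Complex.nonneg_iff.mp (hσ.posSemidef.dotProduct_mulVec_nonneg v)).2.symm
        simp [Complex.sub_im, him, htim]
  -- step B : conjugate by s⁻¹
  set X' := s⁻¹ * X * s⁻¹ with hX'def
  have hX'psd : X'.PosSemidef := by
    have h := hXpsd.conjTranspose_mul_mul_same (s⁻¹)
    rwa [hinvH] at h
  have hconj : (C - X' * X').PosSemidef := by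
    have h := hmain.conjTranspose_mul_mul_same (s⁻¹)
    rw [hinvH] at h
    have hid : s⁻¹ * (σ - X * ρ⁻¹ * X) * s⁻¹ = C - X' * X' := by
      rw [Matrix.mul_sub, Matrix.sub_mul, hρinv]
      congr 1
      rw [hX'def]
      simp only [Matrix.mul_assoc]
    rwa [hid] at h
  have hX2psd : (X' * X').PosSemidef := by
    have := Matrix.posSemidef_conjTranspose_mul_self X'
    rwa [hX'psd.1.eq] at this
  have hsqrt_eq : X' = hX2psd.sqrt := hX'psd.eq_sqrt_of_sq_eq hX2psd (pow_two X')
  have hmono : (Y - X').PosSemidef := by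
    have h := sqrt_mono hX2psd hCpsd hconj
    rwa [← hsqrt_eq, ← hYdef] at h
  -- step C : traces
  have hXfact : X = s * X' * s := by
    rw [hX'def]
    calc X = 1 * X * 1 := by rw [Matrix.one_mul, Matrix.mul_one]
    _ = (s * s⁻¹) * X * (s⁻¹ * s) := by rw [hs1, hs2]
    _ = s * (s⁻¹ * X * s⁻¹) * s := by simp only [Matrix.mul_assoc]
  have htrX : X.trace = ((∑ x, Real.sqrt (p x * q x) : ℝ) : ℂ) := by
    rw [hXdef, Matrix.trace_sum]
    push_cast
    exact Finset.sum_congr rfl fun x _ => by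
      rw [Matrix.trace_smul, (hT.states x).2, smul_eq_mul, mul_one]
  have htrρX' : (ρ * X').trace = X.trace := by
    conv_rhs => rw [hXfact]
    rw [Matrix.trace_mul_cycle, hss]
  have htr_le : ((ρ * X').trace).re ≤ ((ρ * Y).trace).re := by
    have h0 : (0:ℂ) ≤ (ρ * (Y - X')).trace := trace_mul_psd_nonneg hρpsd hmono
    rw [Matrix.mul_sub, Matrix.trace_sub] at h0
    have := (Complex.nonneg_iff.mp h0).1
    simp only [Complex.sub_re] at this
    linarith
  calc ∑ x, Real.sqrt (p x * q x) = ((ρ * X').trace).re := by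
        rw [htrρX', htrX, Complex.ofReal_re]
  _ ≤ ((ρ * Y).trace).re := htr_le
lemma posdef_diag_pos {M : Matrix n n ℂ} (hM : M.PosDef) (i : n) : 0 < M i i := by
  have h := hM.dotProduct_mulVec_pos (x := Pi.single i (1:ℂ)) (by simp [Pi.single_eq_same, Function.ne_iff])
  simpa [dotProduct, Pi.single_apply, Matrix.mulVec] using h

theorem achieve {d : ℕ} {ρ σ : Matrix (Fin d) (Fin d) ℂ}
    (hρ : ρ.PosDef) (hσ : σ.PosDef) (hρ1 : ρ.trace = 1) (hσ1 : σ.trace = 1) :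
    ∃ (R : Fin d → Matrix (Fin d) (Fin d) ℂ) (p q : Fin d → ℝ),
      IsReverseTest ρ σ R p q ∧
      ∑ x, Real.sqrt (p x * q x)
        = ((ρ * msqrt ((msqrt ρ)⁻¹ * σ * (msqrt ρ)⁻¹)).trace).re := by
  have hρpsd := hρ.posSemidef
  have hs_eq : msqrt ρ = hρpsd.sqrt := dif_pos hρpsd
  set s := hρpsd.sqrt with hsdef
  have hsPD : s.PosDef := sqrt_posDef hρ
  have hsH : sᴴ = s := hρpsd.posSemidef_sqrt.1
  have hss : s * s = ρ := hρpsd.sqrt_mul_self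
  have hdet : IsUnit s.det := hsPD.det_pos.ne'.isUnit
  have hs1 : s * s⁻¹ = 1 := Matrix.mul_nonsing_inv s hdet
  have hs2 : s⁻¹ * s = 1 := Matrix.nonsing_inv_mul s hdet
  have hinvH : (s⁻¹)ᴴ = s⁻¹ := by rw [Matrix.conjTranspose_nonsing_inv, hsH]
  set C := s⁻¹ * σ * s⁻¹ with hCdef
  have hCPD : C.PosDef := by
    have hu : IsUnit (s⁻¹) := (Matrix.isUnit_iff_isUnit_det _).mpr (s.isUnit_nonsing_inv_det hdet)
    have h2 := posDef_conj hσ hu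
    rwa [hinvH] at h2
  have hCpsd := hCPD.posSemidef
  have hY_eq : msqrt C = hCpsd.sqrt := dif_pos hCpsd
  rw [hs_eq, ← hCdef, hY_eq]
  set Y := hCpsd.sqrt with hYdef
  -- spectral data
  set V : Matrix (Fin d) (Fin d) ℂ := (hCpsd.1.eigenvectorUnitary : Matrix (Fin d) (Fin d) ℂ)
    with hVdef
  set lam : Fin d → ℝ := hCpsd.1.eigenvalues with hlamdef
  have hlam_pos : ∀ i, 0 < lam i := fun i => hCPD.eigenvalues_pos i
  have hVV : V * Vᴴ = 1 := by
    rw [← Matrix.star_eq_conjTranspose]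
    exact Matrix.mem_unitaryGroup_iff.mp hCpsd.1.eigenvectorUnitary.2
  have hVV' : Vᴴ * V = 1 := by
    rw [← Matrix.star_eq_conjTranspose]
    exact Matrix.mem_unitaryGroup_iff'.mp hCpsd.1.eigenvectorUnitary.2
  have hspec : C = V * Matrix.diagonal (RCLike.ofReal ∘ lam) * Vᴴ := by
    rw [← Matrix.star_eq_conjTranspose]
    exact hCpsd.1.spectral_theorem
  have hYspec : Y = V * Matrix.diagonal (RCLike.ofReal ∘ Real.sqrt ∘ lam) * Vᴴ := by
    rw [← Matrix.star_eq_conjTranspose]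
    rfl
  set W := s * V with hWdef
  have hWH : Wᴴ = Vᴴ * s := by rw [hWdef, Matrix.conjTranspose_mul, hsH]
  have hWWH : W * Wᴴ = ρ := by
    rw [hWH, hWdef, Matrix.mul_assoc, ← Matrix.mul_assoc V Vᴴ s, hVV, Matrix.one_mul, hss]
  have hWHW : Wᴴ * W = Vᴴ * ρ * V := by
    rw [hWH, hWdef, ← hss]
    simp only [Matrix.mul_assoc]
  have hWDWH : ∀ c : Fin d → ℂ, W * Matrix.diagonal c * Wᴴ
      = s * (V * Matrix.diagonal c * Vᴴ) * s := by
    intro c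
    rw [hWH, hWdef]
    simp only [Matrix.mul_assoc]
  have hVρV : (Vᴴ * ρ * V).PosDef := by
    apply posDef_conj hρ
    exact (Matrix.isUnit_iff_isUnit_det _).mpr
      (IsUnit.of_mul_eq_one (a := V.det) Vᴴ.det (by rw [← Matrix.det_mul, hVV, Matrix.det_one]))
  set P : Fin d → ℂ := fun i => (Wᴴ * W) i i with hPdef
  have hP_pos : ∀ i, 0 < P i := fun i => by
    rw [hPdef]; simp only []
    rw [hWHW]; exact posdef_diag_pos hVρV i
  set p : Fin d → ℝ := fun i => (P i).re with hpdef
  have hp_pos : ∀ i, 0 < p i := fun i => (Complex.pos_iff.mp (hP_pos i)).1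
  have hPre : ∀ i, ((p i : ℝ) : ℂ) = P i := fun i => by
    apply Complex.ext
    · simp [hpdef]
    · simp [hpdef, ← (Complex.pos_iff.mp (hP_pos i)).2]
  set q : Fin d → ℝ := fun i => lam i * p i with hqdef
  set M : Fin d → Matrix (Fin d) (Fin d) ℂ :=
    fun i => Matrix.vecMulVec (fun k => W k i) (fun k => star (W k i)) with hMdef
  have hMpsd : ∀ i, (M i).PosSemidef := fun i => by
    have := outer_psd (fun k => W k i)
    exact this
  have hstar : ∀ i : Fin d, (fun k => star (W k i)) = star (fun k => W k i) := fun i => rfl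
  have hMtr : ∀ i, (M i).trace = P i := fun i => by
    rw [hMdef]
    simp only []
    rw [hstar i, outer_trace]
    simp [hPdef, Matrix.mul_apply, dotProduct, Matrix.conjTranspose_apply]
  have hE : ∀ c : Fin d → ℂ, ∑ i, c i • M i = W * Matrix.diagonal c * Wᴴ := fun c =>
    outer_sum W c
  have hSum1 : ∑ i, M i = ρ := by
    have := hE (fun _ => 1)
    simp only [one_smul] at this
    rw [this, Matrix.diagonal_one, Matrix.mul_one, hWWH]
  have hSum2 : ∑ i, ((lam i : ℝ) : ℂ) • M i = σ := by
    have := hE (fun i => ((lam i : ℝ) : ℂ))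
    rw [this]
    have : Matrix.diagonal (fun i => ((lam i : ℝ):ℂ)) = Matrix.diagonal (RCLike.ofReal ∘ lam) := rfl
    rw [this, hWDWH, ← hspec, hCdef]
    rw [Matrix.mul_assoc s⁻¹ σ s⁻¹, ← Matrix.mul_assoc s s⁻¹, hs1, Matrix.one_mul,
      Matrix.mul_assoc, hs2, Matrix.mul_one]
  have hSum3 : ∑ i, ((Real.sqrt (lam i) : ℝ) : ℂ) • M i = s * Y * s := by
    have := hE (fun i => ((Real.sqrt (lam i) : ℝ) : ℂ))
    rw [this]
    have h2 : Matrix.diagonal (fun i => ((Real.sqrt (lam i) : ℝ):ℂ))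
        = Matrix.diagonal (RCLike.ofReal ∘ Real.sqrt ∘ lam) := rfl
    rw [h2, hWDWH, ← hYspec]
  -- costruct the reverse test
  refine ⟨fun i => (((p i)⁻¹ : ℝ) : ℂ) • M i, p, q, ⟨?_, ?_, ?_, ?_, ?_, ?_, ?_⟩, ?_⟩
  · intro i
    constructor
    · exact smul_psd (hMpsd i) (inv_nonneg.mpr (hp_pos i).le)
    · rw [Matrix.trace_smul, hMtr, smul_eq_mul, ← hPre]
      rw [← Complex.ofReal_mul, inv_mul_cancel₀ (hp_pos i).ne', Complex.ofReal_one]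
  · exact fun i => (hp_pos i).le
  · exact fun i => mul_nonneg (hlam_pos i).le (hp_pos i).le
  · -- p sums to 1
    have h1 : ((∑ i, p i : ℝ) : ℂ) = ∑ i, P i := by push_cast; exact Finset.sum_congr rfl fun i _ => hPre i
    have h2 : ∑ i, P i = (Wᴴ * W).trace := by rw [Matrix.trace]; rfl
    have h3 : (Wᴴ * W).trace = 1 := by rw [Matrix.trace_mul_comm, hWWH, hρ1]
    have := h1.trans (h2.trans h3)
    exact_mod_cast this
  · -- q sums to 1
    have h1 : ((∑ i, q i : ℝ) : ℂ) = ∑ i, ((lam i : ℝ):ℂ) * P i := by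
      push_cast
      exact Finset.sum_congr rfl fun i _ => by rw [hqdef]; push_cast; rw [hPre]
    have h2 : ∑ i, ((lam i : ℝ):ℂ) * P i = σ.trace := by
      rw [← hSum2, Matrix.trace_sum]
      exact Finset.sum_congr rfl fun i _ => by rw [Matrix.trace_smul, hMtr, smul_eq_mul]
    have := h1.trans (h2.trans hσ1)
    exact_mod_cast this
  · -- rho_eq
    have : ∀ i, ((p i : ℝ):ℂ) • ((((p i)⁻¹ : ℝ) : ℂ) • M i) = M i := fun i => by
      rw [smul_smul, ← Complex.ofReal_mul, mul_inv_cancel₀ (hp_pos i).ne', Complex.ofReal_one,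
        one_smul]
    rw [Finset.sum_congr rfl fun i _ => this i, hSum1]
  · -- sigma_eq
    have : ∀ i, ((q i : ℝ):ℂ) • ((((p i)⁻¹ : ℝ) : ℂ) • M i) = ((lam i : ℝ):ℂ) • M i := fun i => by
      rw [smul_smul, ← Complex.ofReal_mul]
      congr 2
      show (lam i * p i) * (p i)⁻¹ = lam i
      rw [mul_assoc, mul_inv_cancel₀ (hp_pos i).ne', mul_one]
    rw [Finset.sum_congr rfl fun i _ => this i, hSum2]
  · -- the value
    have hval : ∀ i, Real.sqrt (p i * q i) = Real.sqrt (lam i) * p i := fun i => by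
      rw [hqdef]
      have : p i * (lam i * p i) = lam i * (p i * p i) := by ring
      rw [this, Real.sqrt_mul (hlam_pos i).le, Real.sqrt_mul_self (hp_pos i).le]
    rw [Finset.sum_congr rfl fun i _ => hval i]
    have h1 : (ρ * Y).trace = ∑ i, ((Real.sqrt (lam i) : ℝ):ℂ) * P i := by
      have : (ρ * Y).trace = (s * Y * s).trace := by
        rw [Matrix.trace_mul_cycle, hss]
      rw [this, ← hSum3, Matrix.trace_sum]
      exact Finset.sum_congr rfl fun i _ => by rw [Matrix.trace_smul, hMtr, smul_eq_mul]
    rw [h1, Complex.re_sum]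
    exact Finset.sum_congr rfl fun i _ => by
      rw [← hPre]
      simp [← Complex.ofReal_mul]


end MyHelpers

theorem stmt2 {d : ℕ} (ρ σ : Matrix (Fin d) (Fin d) ℂ)
    (hρ : ρ.PosDef) (hσ : σ.PosDef) (hρ1 : ρ.trace = 1) (hσ1 : σ.trace = 1) :
    Fmin ρ σ = ((ρ * msqrt ((msqrt ρ)⁻¹ * σ * (msqrt ρ)⁻¹)).trace).re := by
  obtain ⟨R0, p0, q0, hRT, hval⟩ := achieve hρ hσ hρ1 hσ1
  set F := ((ρ * msqrt ((msqrt ρ)⁻¹ * σ * (msqrt ρ)⁻¹)).trace).re with hF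
  have hub : ∀ r ∈ {r : ℝ | ∃ (m : ℕ) (R : Fin m → Matrix (Fin d) (Fin d) ℂ)
      (p q : Fin m → ℝ), IsReverseTest ρ σ R p q ∧ r = ∑ x, Real.sqrt (p x * q x)}, r ≤ F := by
    rintro r ⟨m, R, p, q, hT, rfl⟩
    exact upper_bound hρ hσ hT
  have hF0 : 0 ≤ F := by
    rw [← hval]
    exact Finset.sum_nonneg fun x _ => Real.sqrt_nonneg _
  have hmem : F ∈ {r : ℝ | ∃ (m : ℕ) (R : Fin m → Matrix (Fin d) (Fin d) ℂ)
      (p q : Fin m → ℝ), IsReverseTest ρ σ R p q ∧ r = ∑ x, Real.sqrt (p x * q x)} :=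
    ⟨d, R0, p0, q0, hRT, hval.symm⟩
  unfold Fmin
  exact le_antisymm (Real.sSup_le hub hF0) (le_csSup ⟨F, hub⟩ hmem)
end

section
/- Suppose F^Q is a real-valued function of pairs of density matrices that (N) coincides with classical fidelity F(p,q)=Σ√(p q) on commuting (diagonal) pairs, and (M) is monotone increasing under all CPTP maps. Then for all density matrices ρ, σ: F_min(ρ,σ) ≤ F^Q(ρ,σ) ≤ F(ρ,σ), where F_min(ρ,σ) = tr(ρ#σ) and F(ρ,σ) = tr√(√σ ρ √σ) is the Uhlmann fidelity. -/
open Matrix BigOperators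
open scoped ComplexOrder Classical

lemma msqrt_eq {n : Type*} [Fintype n] [DecidableEq n] {A : Matrix n n ℂ} (h : A.PosSemidef) :
    msqrt A = (h.1.eigenvectorUnitary : Matrix n n ℂ) *
      diagonal ((↑) ∘ Real.sqrt ∘ h.1.eigenvalues) *
      (star h.1.eigenvectorUnitary : Matrix n n ℂ) := dif_pos h

lemma msqrt_psd {n : Type*} [Fintype n] [DecidableEq n] {A : Matrix n n ℂ} (h : A.PosSemidef) :
    (msqrt A).PosSemidef := by
  rw [msqrt_eq h]
  have hd : (diagonal ((↑) ∘ Real.sqrt ∘ h.1.eigenvalues) : Matrix n n ℂ).PosSemidef :=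
    posSemidef_diagonal_iff.mpr fun i => by simp [Complex.zero_le_real, Real.sqrt_nonneg]
  have := hd.mul_mul_conjTranspose_same (h.1.eigenvectorUnitary : Matrix n n ℂ)
  simpa [Matrix.star_eq_conjTranspose] using this

lemma msqrt_mul_self {n : Type*} [Fintype n] [DecidableEq n] {A : Matrix n n ℂ}
    (h : A.PosSemidef) : msqrt A * msqrt A = A := by
  rw [msqrt_eq h]
  have hUU : (star h.1.eigenvectorUnitary : Matrix n n ℂ) * (h.1.eigenvectorUnitary : Matrix n n ℂ)
      = 1 := by simp
  conv_rhs => rw [h.1.spectral_theorem, Unitary.conjStarAlgAut_apply]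
  set U : Matrix n n ℂ := (h.1.eigenvectorUnitary : Matrix n n ℂ)
  set S : Matrix n n ℂ := (star h.1.eigenvectorUnitary : Matrix n n ℂ)
  rw [show ∀ E : Matrix n n ℂ, U * E * S * (U * E * S) = U * (E * (S * U) * E) * S from
    fun E => by noncomm_ring, hUU, Matrix.mul_one, diagonal_mul_diagonal]
  congr 2
  congr 1
  funext i
  simp [← Complex.ofReal_mul, Real.mul_self_sqrt (h.eigenvalues_nonneg i)]

noncomputable def prepChan {d : ℕ} (r U : Matrix (Fin d) (Fin d) ℂ) (p : Fin d → ℝ) :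
    Matrix (Fin d) (Fin d) ℂ →ₗ[ℂ] Matrix (Fin d) (Fin d) ℂ where
  toFun X := r * (U * Matrix.diagonal (fun i => X i i * ((p i : ℝ) : ℂ)⁻¹) * star U) * r
  map_add' X Y := by
    have h : (Matrix.diagonal fun i => X i i * ((p i:ℝ):ℂ)⁻¹ + Y i i * ((p i:ℝ):ℂ)⁻¹)
        = Matrix.diagonal (fun i => X i i * ((p i:ℝ):ℂ)⁻¹)
          + Matrix.diagonal (fun i => Y i i * ((p i:ℝ):ℂ)⁻¹) := by
      rw [Matrix.diagonal_add]
    simp only [Matrix.add_apply, add_mul, h, Matrix.mul_add, Matrix.add_mul]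
  map_smul' c X := by
    have h : (Matrix.diagonal fun i => c * (X i i * ((p i:ℝ):ℂ)⁻¹))
        = c • Matrix.diagonal (fun i => X i i * ((p i:ℝ):ℂ)⁻¹) := by
      ext a b
      by_cases hab : a = b <;> simp [hab, Matrix.diagonal_apply]
    simp only [Matrix.smul_apply, smul_eq_mul, mul_assoc, h, Matrix.mul_smul, Matrix.smul_mul,
      RingHom.id_apply]

lemma prepChan_apply {d : ℕ} (r U : Matrix (Fin d) (Fin d) ℂ) (p : Fin d → ℝ)
    (X : Matrix (Fin d) (Fin d) ℂ) :
    prepChan r U p X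
      = r * (U * Matrix.diagonal (fun i => X i i * ((p i : ℝ) : ℂ)⁻¹) * star U) * r := rfl

lemma mul_diag_mul_apply {d : ℕ} (M N : Matrix (Fin d) (Fin d) ℂ) (g : Fin d → ℂ) (j l : Fin d) :
    (M * Matrix.diagonal g * N) j l = ∑ m, M j m * g m * N m l := by
  simp [Matrix.mul_apply, Matrix.diagonal_apply, Finset.sum_mul, mul_ite, ite_mul,
    Finset.sum_ite_eq', Finset.sum_ite_eq]

lemma choi_prepChan {d : ℕ} (r U : Matrix (Fin d) (Fin d) ℂ) (p : Fin d → ℝ)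
    (hr : r.IsHermitian) (pr qr : Fin d × Fin d) :
    choiMatrix (prepChan r U p) pr qr
      = if pr.1 = qr.1 then
          ((p pr.1 : ℝ) : ℂ)⁻¹ * ((r * U) pr.2 pr.1 * star ((r * U) qr.2 pr.1)) else 0 := by
  rcases pr with ⟨i, j⟩; rcases qr with ⟨k, l⟩
  show (r * (U * Matrix.diagonal (fun m => Matrix.single i k (1:ℂ) m m * ((p m:ℝ):ℂ)⁻¹) * star U) * r) j l = _
  have hshape : r * (U * Matrix.diagonal (fun m => Matrix.single i k (1:ℂ) m m * ((p m:ℝ):ℂ)⁻¹) * star U) * r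
      = (r * U) * Matrix.diagonal (fun m => Matrix.single i k (1:ℂ) m m * ((p m:ℝ):ℂ)⁻¹) * (star U * r) := by
    noncomm_ring
  rw [hshape, mul_diag_mul_apply]
  have hsUr : ∀ a b, (star U * r) a b = star ((r * U) b a) := by
    intro a b
    rw [Matrix.mul_apply, Matrix.mul_apply, star_sum]
    refine Finset.sum_congr rfl fun m _ => ?_
    rw [star_mul']
    have : star (r b m) = r m b := by
      conv_rhs => rw [← hr]
      simp [Matrix.conjTranspose_apply]
    simp [Matrix.star_eq_conjTranspose, Matrix.conjTranspose_apply, this, mul_comm]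
  by_cases hik : i = k
  · subst hik
    simp only [if_pos rfl]
    rw [Finset.sum_eq_single i]
    · simp [Matrix.single_apply_same, hsUr]; ring
    · intro m _ hm
      simp [Matrix.single, Ne.symm hm]
    · simp
  · simp only [if_neg hik]
    refine Finset.sum_eq_zero fun m _ => ?_
    have : Matrix.single i k (1:ℂ) m m = 0 := by
      simp only [Matrix.single, Matrix.of_apply, ite_eq_right_iff, and_imp,
        one_ne_zero, imp_false]
      intro h1
      exact hik (h1.1.trans h1.2.symm)
    simp [this]

lemma choi_prepChan_psd {d : ℕ} (r U : Matrix (Fin d) (Fin d) ℂ) (p : Fin d → ℝ)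
    (hr : r.IsHermitian) (hp : ∀ i, 0 < p i) :
    (choiMatrix (prepChan r U p)).PosSemidef := by
  refine Matrix.PosSemidef.of_dotProduct_mulVec_nonneg ?_ ?_
  · ext pr qr
    rw [Matrix.conjTranspose_apply, choi_prepChan r U p hr, choi_prepChan r U p hr]
    rcases pr with ⟨i, j⟩; rcases qr with ⟨k, l⟩
    by_cases hik : i = k
    · subst hik
      simp only [eq_self_iff_true, if_true]
      rw [star_mul', star_mul', star_star]
      rw [show star (((p i:ℝ):ℂ)⁻¹) = ((p i:ℝ):ℂ)⁻¹ by
        simp [Complex.star_def, map_inv₀, Complex.conj_ofReal]]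
      ring
    · simp only [if_neg hik, if_neg (Ne.symm hik)]
      exact star_zero _
  · intro x
    set V := r * U with hV
    set z : Fin d → ℂ := fun i => ∑ l, star (V l i) * x (i, l) with hzdef
    have hz : ∀ i, star (z i) = ∑ j, V j i * star (x (i, j)) := by
      intro i
      rw [hzdef, star_sum]
      exact Finset.sum_congr rfl fun j _ => by rw [star_mul', star_star]
    have hCx : ∀ i j, (choiMatrix (prepChan r U p) *ᵥ x) (i, j)
        = ((p i:ℝ):ℂ)⁻¹ * (V j i * z i) := by
      intro i j
      show dotProduct (choiMatrix (prepChan r U p) (i, j)) x = _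
      rw [dotProduct, Fintype.sum_prod_type, Finset.sum_comm]
      simp only [choi_prepChan r U p hr, ite_mul, zero_mul, Finset.sum_ite_eq,
        Finset.mem_univ, if_true]
      rw [hzdef, Finset.mul_sum, Finset.mul_sum]
      exact Finset.sum_congr rfl fun l _ => by ring
    have hexp : dotProduct (star x) (choiMatrix (prepChan r U p) *ᵥ x)
        = ∑ i, ((p i:ℝ):ℂ)⁻¹ * (star (z i) * z i) := by
      rw [dotProduct, Fintype.sum_prod_type]
      refine Finset.sum_congr rfl fun i _ => ?_
      rw [hz i, Finset.sum_mul, Finset.mul_sum]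
      refine Finset.sum_congr rfl fun j _ => ?_
      rw [Pi.star_apply, hCx i j]
      ring
    rw [hexp]
    refine Finset.sum_nonneg fun i _ => ?_
    rw [← Complex.ofReal_inv]
    exact mul_nonneg (Complex.zero_le_real.mpr (inv_nonneg.mpr (hp i).le))
      (star_mul_self_nonneg _)

lemma trace_diag_mul {d : ℕ} (f : Fin d → ℂ) (Y : Matrix (Fin d) (Fin d) ℂ) :
    (Matrix.diagonal f * Y).trace = ∑ i, f i * Y i i := by
  simp [Matrix.trace, Matrix.diag, Matrix.diagonal_mul]

lemma trace_conj3 {d : ℕ} (r U D : Matrix (Fin d) (Fin d) ℂ) :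
    (r * (U * D * star U) * r).trace = (D * (star U * (r * r) * U)).trace := by
  rw [show r * (U * D * star U) * r = (r * U) * D * (star U * r) by noncomm_ring,
    Matrix.trace_mul_cycle]
  rw [show star U * r * (r * U) * D = (star U * (r * r) * U) * D by noncomm_ring,
    Matrix.trace_mul_comm]

noncomputable def measChan {d : ℕ} (U : Matrix (Fin d) (Fin d) ℂ) :
    Matrix (Fin d) (Fin d) ℂ →ₗ[ℂ] Matrix (Fin d) (Fin d) ℂ where
  toFun X := Matrix.diagonal fun i => (star U * X * U) i i
  map_add' X Y := by
    ext i j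
    by_cases h : i = j <;> simp [h, Matrix.mul_add, Matrix.add_mul]
  map_smul' c X := by
    ext i j
    by_cases h : i = j <;> simp [h, Matrix.mul_smul, Matrix.smul_mul]

lemma measChan_apply {d : ℕ} (U X : Matrix (Fin d) (Fin d) ℂ) :
    measChan U X = Matrix.diagonal fun i => (star U * X * U) i i := rfl

lemma choi_measChan {d : ℕ} (U : Matrix (Fin d) (Fin d) ℂ) (pr qr : Fin d × Fin d) :
    choiMatrix (measChan U) pr qr
      = if pr.2 = qr.2 then star (U pr.1 pr.2) * U qr.1 qr.2 else 0 := by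
  rcases pr with ⟨i, j⟩; rcases qr with ⟨k, l⟩
  show (Matrix.diagonal fun m => (star U * Matrix.single i k (1:ℂ) * U) m m) j l = _
  by_cases h : j = l
  · subst h
    simp [Matrix.diagonal_apply_eq, Matrix.mul_apply, Matrix.single,
      Matrix.star_eq_conjTranspose, Matrix.conjTranspose_apply, Finset.sum_ite_eq, ite_and]
  · simp [Matrix.diagonal_apply_ne _ h, h]

lemma choi_measChan_psd {d : ℕ} (U : Matrix (Fin d) (Fin d) ℂ) :
    (choiMatrix (measChan U)).PosSemidef := by
  refine Matrix.PosSemidef.of_dotProduct_mulVec_nonneg ?_ ?_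
  · ext pr qr
    rw [Matrix.conjTranspose_apply, choi_measChan, choi_measChan]
    rcases pr with ⟨i, j⟩; rcases qr with ⟨k, l⟩
    by_cases h : j = l
    · subst h
      simp only [eq_self_iff_true, if_true]
      rw [star_mul', star_star]
      ring
    · simp only [if_neg h, if_neg (Ne.symm h)]
      exact star_zero _
  · intro x
    have hy : ∀ j, (∑ i, star (x (i,j)) * ∑ k, star (U i j) * U k j * x (k,j))
        = star (∑ k, U k j * x (k, j)) * (∑ k, U k j * x (k, j)) := by
      intro j
      rw [star_sum, Finset.sum_mul_sum]
      refine Finset.sum_congr rfl fun i _ => ?_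
      rw [Finset.mul_sum]
      refine Finset.sum_congr rfl fun k _ => ?_
      simp [star_mul']
      ring
    have hexp : dotProduct (star x) (choiMatrix (measChan U) *ᵥ x)
        = ∑ j : Fin d, ∑ i, star (x (i,j)) * ∑ k, star (U i j) * U k j * x (k,j) := by
      simp only [dotProduct, Matrix.mulVec, Fintype.sum_prod_type, choi_measChan,
        Pi.star_apply, Finset.mul_sum, ite_mul, zero_mul, mul_ite, mul_zero, Finset.sum_ite_eq,
        Finset.mem_univ, if_true]
      rw [Finset.sum_comm]
    rw [hexp, Finset.sum_congr rfl fun j _ => hy j]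
    exact Finset.sum_nonneg fun j _ => star_mul_self_nonneg _


lemma psd_diag_re {d : ℕ} {X : Matrix (Fin d) (Fin d) ℂ} (hX : X.PosSemidef) (i : Fin d) :
    X i i = (((X i i).re : ℝ) : ℂ) ∧ 0 ≤ (X i i).re := by
  have h : 0 ≤ X i i := by
    have h2 := hX.dotProduct_mulVec_nonneg (Pi.single i 1)
    simpa [dotProduct, Matrix.mulVec, Pi.single_apply] using h2
  rw [Complex.le_def] at h
  refine ⟨?_, by simpa using h.1⟩
  apply Complex.ext
  · simp
  · simp [← h.2]

lemma lower_bound {d : ℕ}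
    (FQ : Matrix (Fin d) (Fin d) ℂ → Matrix (Fin d) (Fin d) ℂ → ℝ)
    (hN : ∀ p q : Fin d → ℝ, (∀ x, 0 ≤ p x) → (∀ x, 0 ≤ q x) →
      ∑ x, p x = 1 → ∑ x, q x = 1 →
      FQ (Matrix.diagonal fun x => (p x : ℂ)) (Matrix.diagonal fun x => (q x : ℂ)) =
        ∑ x, Real.sqrt (p x * q x))
    (hM : ∀ Λ : Matrix (Fin d) (Fin d) ℂ →ₗ[ℂ] Matrix (Fin d) (Fin d) ℂ, IsCPTP Λ →
      ∀ ρ σ : Matrix (Fin d) (Fin d) ℂ, IsDensity ρ → IsDensity σ →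
        FQ ρ σ ≤ FQ (Λ ρ) (Λ σ))
    (ρ σ : Matrix (Fin d) (Fin d) ℂ)
    (hρ : ρ.PosDef) (hσ : σ.PosDef) (hρ1 : ρ.trace = 1) (hσ1 : σ.trace = 1) :
    ((gm ρ σ).trace).re ≤ FQ ρ σ := by
  have hρs : ρ.PosSemidef := hρ.posSemidef
  set r := msqrt ρ with hrdef
  have hrr : r * r = ρ := msqrt_mul_self hρs
  have hrpsd : r.PosSemidef := msqrt_psd hρs
  have hrH : r.IsHermitian := hrpsd.1
  have hrdet : IsUnit r.det := by
    have hdet : r.det * r.det = ρ.det := by rw [← Matrix.det_mul, hrr]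
    have hρdet : ρ.det ≠ 0 := ne_of_gt hρ.det_pos
    rw [isUnit_iff_ne_zero]
    intro h0
    exact hρdet (by rw [← hdet, h0, mul_zero])
  have hri : r⁻¹ * r = 1 := Matrix.nonsing_inv_mul r hrdet
  have hir : r * r⁻¹ = 1 := Matrix.mul_nonsing_inv r hrdet
  have hriH : (r⁻¹).IsHermitian := hrH.inv
  set K := r⁻¹ * σ * r⁻¹ with hKdef
  have hK : K.PosSemidef := by
    have h := hσ.posSemidef.mul_mul_conjTranspose_same r⁻¹
    rwa [hriH.eq] at h
  set W := msqrt K with hWdef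
  have hWW : W * W = K := msqrt_mul_self hK
  have hWpsd : W.PosSemidef := msqrt_psd hK
  have hWH : W.IsHermitian := hWpsd.1
  have hgm : gm ρ σ = r * W * r := by
    rw [gm, show msqrt ρ = r from rfl]
  set U : Matrix (Fin d) (Fin d) ℂ := (hWH.eigenvectorUnitary : Matrix (Fin d) (Fin d) ℂ) with hUdef
  set ev : Fin d → ℝ := hWH.eigenvalues with hevdef
  have hUU : star U * U = 1 := Matrix.mem_unitaryGroup_iff'.mp hWH.eigenvectorUnitary.2
  have hUU' : U * star U = 1 := Matrix.mem_unitaryGroup_iff.mp hWH.eigenvectorUnitary.2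
  set D := Matrix.diagonal (fun i => ((ev i : ℝ) : ℂ)) with hDdef
  have hUDU : W = U * D * star U := by
    have h := hWH.spectral_theorem
    rw [Unitary.conjStarAlgAut_apply] at h
    exact h
  have hev0 : ∀ i, 0 ≤ ev i := fun i => hWpsd.eigenvalues_nonneg i
  set X := star U * ρ * U with hXdef
  have hXpsd : X.PosSemidef := by
    have h := hρs.conjTranspose_mul_mul_same U
    rwa [← Matrix.star_eq_conjTranspose] at h
  set p : Fin d → ℝ := fun i => (X i i).re with hpdef
  have hpX : ∀ i, X i i = ((p i : ℝ) : ℂ) := fun i => (psd_diag_re hXpsd i).1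
  have hp0 : ∀ i, 0 ≤ p i := fun i => (psd_diag_re hXpsd i).2
  have hppos : ∀ i, 0 < p i := by
    intro i
    have hu : (fun a => U a i) ≠ 0 := by
      intro h0
      have h1 : (star U * U) i i = 1 := by rw [hUU, Matrix.one_apply_eq]
      rw [Matrix.mul_apply] at h1
      have h2 : ∀ a, U a i = 0 := fun a => congrFun h0 a
      simp [Matrix.star_eq_conjTranspose, Matrix.conjTranspose_apply, h2] at h1
    have hXi : X i i = dotProduct (star (fun a => U a i)) (ρ *ᵥ (fun a => U a i)) := by
      rw [hXdef, Matrix.mul_assoc, Matrix.mul_apply]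
      simp only [dotProduct, Pi.star_apply, Matrix.mulVec, Matrix.star_eq_conjTranspose,
        Matrix.conjTranspose_apply, Matrix.mul_apply, dotProduct]
    have hpos := hρ.dotProduct_mulVec_pos hu
    rw [← hXi] at hpos
    rw [Complex.lt_def] at hpos
    simpa [hpdef] using hpos.1
  set q : Fin d → ℝ := fun i => ev i ^ 2 * p i with hqdef
  have hq0 : ∀ i, 0 ≤ q i := fun i => mul_nonneg (sq_nonneg _) (hp0 i)
  have hpne : ∀ i, ((p i : ℝ) : ℂ) ≠ 0 := by
    intro i
    simpa using ne_of_gt (hppos i)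
  have htr : ∀ f : Fin d → ℂ,
      (r * (U * Matrix.diagonal f * star U) * r).trace = ∑ i, f i * X i i := by
    intro f
    rw [trace_conj3, hrr, trace_diag_mul]
  have hXtr : X.trace = 1 := by
    rw [hXdef, Matrix.trace_mul_cycle, hUU', Matrix.one_mul, hρ1]
  have hsum_p : ∑ i, p i = 1 := by
    have h := congrArg Complex.re hXtr
    rw [Matrix.trace, Complex.re_sum] at h
    simpa [Matrix.diag, hpdef] using h
  have hσrec : r * (U * Matrix.diagonal (fun i => ((ev i : ℝ):ℂ) * ((ev i : ℝ):ℂ)) * star U) * r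
      = σ := by
    have hDD : U * (D * D) * star U = W * W := by
      rw [hUDU, show U * D * star U * (U * D * star U) = U * D * (star U * U) * (D * star U) by
        noncomm_ring, hUU, Matrix.mul_one]
      noncomm_ring
    have hKsand : r * K * r = σ := by
      rw [hKdef, show r * (r⁻¹ * σ * r⁻¹) * r = r * r⁻¹ * σ * (r⁻¹ * r) by noncomm_ring,
        hir, hri, Matrix.one_mul, Matrix.mul_one]
    calc r * (U * Matrix.diagonal (fun i => ((ev i : ℝ):ℂ) * ((ev i : ℝ):ℂ)) * star U) * r
        = r * (U * (D * D) * star U) * r := by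
          rw [hDdef, Matrix.diagonal_mul_diagonal]
      _ = r * (W * W) * r := by rw [hDD]
      _ = r * K * r := by rw [hWW]
      _ = σ := hKsand
  have hsum_q : ∑ i, q i = 1 := by
    have h := congrArg Matrix.trace hσrec
    rw [htr, hσ1] at h
    have h2 := congrArg Complex.re h
    rw [Complex.re_sum, Complex.one_re] at h2
    rw [← h2]
    refine Finset.sum_congr rfl fun i _ => ?_
    rw [hpX i, hqdef]
    simp only [← Complex.ofReal_mul, Complex.ofReal_re]
    ring
  set Λ := prepChan r U p with hΛdef
  have hTP : ∀ A : Matrix (Fin d) (Fin d) ℂ, (Λ A).trace = A.trace := by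
    intro A
    rw [hΛdef, prepChan_apply, htr, Matrix.trace]
    refine Finset.sum_congr rfl fun i _ => ?_
    rw [hpX i, mul_assoc, inv_mul_cancel₀ (hpne i), mul_one]
    rfl
  have hCPTP : IsCPTP Λ := ⟨choi_prepChan_psd r U p hrH hppos, hTP⟩
  have hΛp : Λ (Matrix.diagonal fun i => ((p i : ℝ) : ℂ)) = ρ := by
    rw [hΛdef, prepChan_apply]
    have hd : (Matrix.diagonal fun i =>
        (Matrix.diagonal fun x => ((p x : ℝ) : ℂ)) i i * ((p i : ℝ) : ℂ)⁻¹) = 1 := by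
      ext a b
      by_cases hab : a = b
      · subst hab
        rw [Matrix.diagonal_apply_eq, Matrix.diagonal_apply_eq, mul_inv_cancel₀ (hpne a),
          Matrix.one_apply_eq]
      · rw [Matrix.diagonal_apply_ne _ hab, Matrix.one_apply_ne hab]
    rw [hd, Matrix.mul_one, hUU', Matrix.mul_one, hrr]
  have hΛq : Λ (Matrix.diagonal fun i => ((q i : ℝ) : ℂ)) = σ := by
    rw [hΛdef, prepChan_apply]
    have hd : (Matrix.diagonal fun i =>
        (Matrix.diagonal fun x => ((q x : ℝ) : ℂ)) i i * ((p i : ℝ) : ℂ)⁻¹)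
        = Matrix.diagonal (fun i => ((ev i : ℝ):ℂ) * ((ev i : ℝ):ℂ)) := by
      ext a b
      by_cases hab : a = b
      · subst hab
        rw [Matrix.diagonal_apply_eq, Matrix.diagonal_apply_eq, Matrix.diagonal_apply_eq, hqdef]
        push_cast
        rw [mul_assoc, mul_inv_cancel₀ (hpne a), mul_one, pow_two]
      · rw [Matrix.diagonal_apply_ne _ hab, Matrix.diagonal_apply_ne _ hab]
    rw [hd, hσrec]
  have hdensp : IsDensity (Matrix.diagonal fun i => ((p i : ℝ) : ℂ)) := by
    refine ⟨Matrix.posSemidef_diagonal_iff.mpr fun i => Complex.zero_le_real.mpr (hp0 i), ?_⟩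
    rw [Matrix.trace_diagonal, ← Complex.ofReal_sum, hsum_p, Complex.ofReal_one]
  have hdensq : IsDensity (Matrix.diagonal fun i => ((q i : ℝ) : ℂ)) := by
    refine ⟨Matrix.posSemidef_diagonal_iff.mpr fun i => Complex.zero_le_real.mpr (hq0 i), ?_⟩
    rw [Matrix.trace_diagonal, ← Complex.ofReal_sum, hsum_q, Complex.ofReal_one]
  have hstep := hM Λ hCPTP _ _ hdensp hdensq
  rw [hΛp, hΛq, hN p q hp0 hq0 hsum_p hsum_q] at hstep
  have hgoal : ((gm ρ σ).trace).re = ∑ i, Real.sqrt (p i * q i) := by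
    rw [hgm, hUDU, hDdef, htr, Complex.re_sum]
    refine Finset.sum_congr rfl fun i _ => ?_
    rw [hpX i, ← Complex.ofReal_mul, Complex.ofReal_re,
      show p i * q i = (ev i * p i) ^ 2 from by simp only [hqdef]; ring,
      Real.sqrt_sq (mul_nonneg (hev0 i) (hp0 i))]
  rw [hgoal]
  exact hstep

lemma upper_bound_s5 {d : ℕ}
    (FQ : Matrix (Fin d) (Fin d) ℂ → Matrix (Fin d) (Fin d) ℂ → ℝ)
    (hN : ∀ p q : Fin d → ℝ, (∀ x, 0 ≤ p x) → (∀ x, 0 ≤ q x) →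
      ∑ x, p x = 1 → ∑ x, q x = 1 →
      FQ (Matrix.diagonal fun x => (p x : ℂ)) (Matrix.diagonal fun x => (q x : ℂ)) =
        ∑ x, Real.sqrt (p x * q x))
    (hM : ∀ Λ : Matrix (Fin d) (Fin d) ℂ →ₗ[ℂ] Matrix (Fin d) (Fin d) ℂ, IsCPTP Λ →
      ∀ ρ σ : Matrix (Fin d) (Fin d) ℂ, IsDensity ρ → IsDensity σ →
        FQ ρ σ ≤ FQ (Λ ρ) (Λ σ))
    (ρ σ : Matrix (Fin d) (Fin d) ℂ)
    (hρ : ρ.PosDef) (hσ : σ.PosDef) (hρ1 : ρ.trace = 1) (hσ1 : σ.trace = 1) :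
    FQ ρ σ ≤ ((msqrt (msqrt σ * ρ * msqrt σ)).trace).re := by
  have hσs : σ.PosSemidef := hσ.posSemidef
  set s := msqrt σ with hsdef
  have hss : s * s = σ := msqrt_mul_self hσs
  have hspsd : s.PosSemidef := msqrt_psd hσs
  have hsH : s.IsHermitian := hspsd.1
  have hsdet : IsUnit s.det := by
    have hdet : s.det * s.det = σ.det := by rw [← Matrix.det_mul, hss]
    have hσdet : σ.det ≠ 0 := ne_of_gt hσ.det_pos
    rw [isUnit_iff_ne_zero]
    intro h0
    exact hσdet (by rw [← hdet, h0, mul_zero])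
  have hsi : s⁻¹ * s = 1 := Matrix.nonsing_inv_mul s hsdet
  have his : s * s⁻¹ = 1 := Matrix.mul_nonsing_inv s hsdet
  have hsiH : (s⁻¹).IsHermitian := hsH.inv
  have hmsqrtσ : msqrt σ = s := rfl
  have hA : (s * ρ * s).PosSemidef := by
    have h := hρ.posSemidef.mul_mul_conjTranspose_same s
    rwa [hsH.eq] at h
  set B := msqrt (s * ρ * s) with hBdef
  have hBB : B * B = s * ρ * s := msqrt_mul_self hA
  have hBpsd : B.PosSemidef := msqrt_psd hA
  have hmsqrtA : msqrt (msqrt σ * ρ * msqrt σ) = B := by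
    rfl
  set M := s⁻¹ * B * s⁻¹ with hMdef
  have hMpsd : M.PosSemidef := by
    have h := hBpsd.mul_mul_conjTranspose_same s⁻¹
    rwa [hsiH.eq] at h
  have hMH : M.IsHermitian := hMpsd.1
  have hMσM : M * σ * M = ρ := by
    have h1 : s⁻¹ * σ * s⁻¹ = 1 := by
      rw [← hss, show s⁻¹ * (s * s) * s⁻¹ = (s⁻¹ * s) * (s * s⁻¹) by noncomm_ring, hsi, his,
        Matrix.one_mul]
    calc M * σ * M = s⁻¹ * B * (s⁻¹ * σ * s⁻¹) * B * s⁻¹ := by rw [hMdef]; noncomm_ring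
      _ = s⁻¹ * (B * B) * s⁻¹ := by rw [h1]; noncomm_ring
      _ = s⁻¹ * (s * ρ * s) * s⁻¹ := by rw [hBB]
      _ = (s⁻¹ * s) * ρ * (s * s⁻¹) := by noncomm_ring
      _ = ρ := by rw [hsi, his, Matrix.one_mul, Matrix.mul_one]
  set U : Matrix (Fin d) (Fin d) ℂ := (hMH.eigenvectorUnitary : Matrix (Fin d) (Fin d) ℂ)
    with hUdef
  set ev : Fin d → ℝ := hMH.eigenvalues with hevdef
  have hUU : star U * U = 1 := Matrix.mem_unitaryGroup_iff'.mp hMH.eigenvectorUnitary.2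
  have hUU' : U * star U = 1 := Matrix.mem_unitaryGroup_iff.mp hMH.eigenvectorUnitary.2
  set D := Matrix.diagonal (fun i => ((ev i : ℝ) : ℂ)) with hDdef
  have hUDU : M = U * D * star U := by
    have h := hMH.spectral_theorem
    rw [Unitary.conjStarAlgAut_apply] at h
    exact h
  have hDiag : star U * M * U = D := by
    rw [hUDU, show star U * (U * D * star U) * U = (star U * U) * D * (star U * U) by
      noncomm_ring, hUU, Matrix.one_mul, Matrix.mul_one]
  have hev0 : ∀ i, 0 ≤ ev i := fun i => hMpsd.eigenvalues_nonneg i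
  have hXpsd : (star U * ρ * U).PosSemidef := by
    have h := hρ.posSemidef.conjTranspose_mul_mul_same U
    rwa [← Matrix.star_eq_conjTranspose] at h
  have hYpsd : (star U * σ * U).PosSemidef := by
    have h := hσs.conjTranspose_mul_mul_same U
    rwa [← Matrix.star_eq_conjTranspose] at h
  set p : Fin d → ℝ := fun i => ((star U * ρ * U) i i).re with hpdef
  set q : Fin d → ℝ := fun i => ((star U * σ * U) i i).re with hqdef
  have hpX : ∀ i, (star U * ρ * U) i i = ((p i : ℝ) : ℂ) := fun i => (psd_diag_re hXpsd i).1
  have hqY : ∀ i, (star U * σ * U) i i = ((q i : ℝ) : ℂ) := fun i => (psd_diag_re hYpsd i).1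
  have hp0 : ∀ i, 0 ≤ p i := fun i => (psd_diag_re hXpsd i).2
  have hq0 : ∀ i, 0 ≤ q i := fun i => (psd_diag_re hYpsd i).2
  have hXtr : (star U * ρ * U).trace = 1 := by
    rw [Matrix.trace_mul_cycle, hUU', Matrix.one_mul, hρ1]
  have hYtr : (star U * σ * U).trace = 1 := by
    rw [Matrix.trace_mul_cycle, hUU', Matrix.one_mul, hσ1]
  have hsum_p : ∑ i, p i = 1 := by
    have h := congrArg Complex.re hXtr
    rw [Matrix.trace, Complex.re_sum, Complex.one_re] at h
    simpa [Matrix.diag, hpdef] using h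
  have hsum_q : ∑ i, q i = 1 := by
    have h := congrArg Complex.re hYtr
    rw [Matrix.trace, Complex.re_sum, Complex.one_re] at h
    simpa [Matrix.diag, hqdef] using h
  have h2 : (star U * M * U) * (star U * σ * U) * (star U * M * U)
      = star U * (M * σ * M) * U := by
    rw [show (star U * M * U) * (star U * σ * U) * (star U * M * U)
        = star U * M * (U * star U) * σ * ((U * star U) * M * U) by noncomm_ring, hUU']
    noncomm_ring
  have hXD : star U * ρ * U = D * (star U * σ * U) * D := by
    rw [← hMσM, ← h2, hDiag]
  have hpq : ∀ i, p i = ev i ^ 2 * q i := by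
    intro i
    have h3 : (star U * ρ * U) i i = ((ev i : ℝ) : ℂ) * ((star U * σ * U) i i) * ((ev i : ℝ):ℂ) := by
      rw [hXD, hDdef, Matrix.mul_diagonal, Matrix.diagonal_mul]
    have h4 := congrArg Complex.re h3
    rw [hqY i, ← Complex.ofReal_mul, ← Complex.ofReal_mul, Complex.ofReal_re] at h4
    simp only [hpdef]
    rw [h4]
    ring
  set Λ := measChan U with hΛdef
  have hTP : ∀ A' : Matrix (Fin d) (Fin d) ℂ, (Λ A').trace = A'.trace := by
    intro A'
    rw [hΛdef, measChan_apply, Matrix.trace_diagonal]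
    calc ∑ i, (star U * A' * U) i i = (star U * A' * U).trace := by rw [Matrix.trace]; rfl
      _ = A'.trace := by rw [Matrix.trace_mul_cycle, hUU', Matrix.one_mul]
  have hCPTP : IsCPTP Λ := ⟨choi_measChan_psd U, hTP⟩
  have hΛρ : Λ ρ = Matrix.diagonal fun i => ((p i : ℝ) : ℂ) := by
    rw [hΛdef, measChan_apply,
      show (fun i => (star U * ρ * U) i i) = fun i => ((p i : ℝ) : ℂ) from funext hpX]
  have hΛσ : Λ σ = Matrix.diagonal fun i => ((q i : ℝ) : ℂ) := by
    rw [hΛdef, measChan_apply,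
      show (fun i => (star U * σ * U) i i) = fun i => ((q i : ℝ) : ℂ) from funext hqY]
  have hstep := hM Λ hCPTP ρ σ ⟨hρ.posSemidef, hρ1⟩ ⟨hσs, hσ1⟩
  rw [hΛρ, hΛσ, hN p q hp0 hq0 hsum_p hsum_q] at hstep
  have hB' : s * (U * D * star U) * s = B := by
    rw [← hUDU, hMdef, show s * (s⁻¹ * B * s⁻¹) * s = (s * s⁻¹) * B * (s⁻¹ * s) by noncomm_ring,
      his, hsi, Matrix.one_mul, Matrix.mul_one]
  have htrB : B.trace = ∑ i, ((ev i : ℝ) : ℂ) * ((star U * σ * U) i i) := by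
    rw [← hB', trace_conj3, hss, hDdef, trace_diag_mul]
  have h5 : (B.trace).re = ∑ i, ev i * q i := by
    rw [htrB, Complex.re_sum]
    refine Finset.sum_congr rfl fun i _ => ?_
    rw [hqY i, ← Complex.ofReal_mul, Complex.ofReal_re]
  have hgoal : ∑ i, Real.sqrt (p i * q i) = ((msqrt (msqrt σ * ρ * msqrt σ)).trace).re := by
    rw [hmsqrtA, h5]
    refine Finset.sum_congr rfl fun i _ => ?_
    rw [show p i * q i = (ev i * q i) ^ 2 from by rw [hpq i]; ring,
      Real.sqrt_sq (mul_nonneg (hev0 i) (hq0 i))]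
  rw [← hgoal]
  exact hstep

theorem stmt5 {d : ℕ}
    (FQ : Matrix (Fin d) (Fin d) ℂ → Matrix (Fin d) (Fin d) ℂ → ℝ)
    (hN : ∀ p q : Fin d → ℝ, (∀ x, 0 ≤ p x) → (∀ x, 0 ≤ q x) →
      ∑ x, p x = 1 → ∑ x, q x = 1 →
      FQ (Matrix.diagonal fun x => (p x : ℂ)) (Matrix.diagonal fun x => (q x : ℂ)) =
        ∑ x, Real.sqrt (p x * q x))
    (hM : ∀ Λ : Matrix (Fin d) (Fin d) ℂ →ₗ[ℂ] Matrix (Fin d) (Fin d) ℂ, IsCPTP Λ →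
      ∀ ρ σ : Matrix (Fin d) (Fin d) ℂ, IsDensity ρ → IsDensity σ →
        FQ ρ σ ≤ FQ (Λ ρ) (Λ σ))
    (ρ σ : Matrix (Fin d) (Fin d) ℂ)
    (hρ : ρ.PosDef) (hσ : σ.PosDef) (hρ1 : ρ.trace = 1) (hσ1 : σ.trace = 1) :
    ((gm ρ σ).trace).re ≤ FQ ρ σ ∧
      FQ ρ σ ≤ ((msqrt (msqrt σ * ρ * msqrt σ)).trace).re :=
  ⟨lower_bound FQ hN hM ρ σ hρ hσ hρ1 hσ1, upper_bound_s5 FQ hN hM ρ σ hρ hσ hρ1 hσ1⟩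
end

section
/- For distinct unit vectors ψ, φ (with |⟨ψ|φ⟩| < 1), F_min(|ψ⟩⟨ψ|, |φ⟩⟨φ|) = 0: any probability distributions p, q and CPTP map Φ with Φ(p)=|ψ⟩⟨ψ| and Φ(q)=|φ⟩⟨φ| satisfy Σ_x √(p(x)q(x)) = 0. -/
open Matrix BigOperators
open scoped ComplexOrder Classical

lemma vecMulVec_mulVec' {d : ℕ} (a b w : Fin d → ℂ) :
    Matrix.vecMulVec a b *ᵥ w = (b ⬝ᵥ w) • a := by
  ext i
  simp [Matrix.mulVec, Matrix.vecMulVec_apply, dotProduct, Finset.mul_sum, mul_comm, mul_assoc, mul_left_comm]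

lemma kill {d m : ℕ} (ψ : Fin d → ℂ) (R : Fin m → Matrix (Fin d) (Fin d) ℂ)
    (p : Fin m → ℝ) (hR : ∀ x, (R x).PosSemidef) (hp : ∀ x, 0 ≤ p x)
    (heq : ∑ x, (p x : ℂ) • R x = Matrix.vecMulVec ψ (star ψ))
    (x : Fin m) (hpx : 0 < p x) (w : Fin d → ℂ) (hw : star ψ ⬝ᵥ w = 0) :
    (R x) *ᵥ w = 0 := by
  have hsum : ∑ y, (p y : ℂ) * (star w ⬝ᵥ (R y) *ᵥ w) = 0 := by
    have h1 : star w ⬝ᵥ (∑ y, (p y : ℂ) • R y) *ᵥ w = 0 := by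
      rw [heq, vecMulVec_mulVec', dotProduct_smul, hw]
      simp
    rw [← h1]
    have hs : (∑ y, (p y : ℂ) • R y) *ᵥ w = ∑ y, ((p y : ℂ) • R y) *ᵥ w := by
      ext i
      simp [Matrix.mulVec, dotProduct, Matrix.sum_apply, Finset.sum_mul]
      rw [Finset.sum_comm]
    rw [hs]
    simp only [dotProduct, Matrix.smul_mulVec, Finset.sum_apply, Pi.smul_apply,
      smul_eq_mul, Finset.mul_sum]
    rw [Finset.sum_comm]
    exact Finset.sum_congr rfl fun i _ => Finset.sum_congr rfl fun y _ => by ring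
  have hterm : (p x : ℂ) * (star w ⬝ᵥ (R x) *ᵥ w) = 0 := by
    have := (Finset.sum_eq_zero_iff_of_nonneg (fun y _ => ?_)).mp hsum x (Finset.mem_univ x)
    · exact this
    · exact mul_nonneg (by exact_mod_cast (hp y)) ((hR y).dotProduct_mulVec_nonneg w)
  have hpx' : (p x : ℂ) ≠ 0 := by exact_mod_cast hpx.ne'
  have h0 : star w ⬝ᵥ (R x) *ᵥ w = 0 := by
    rcases mul_eq_zero.mp hterm with h | h
    · exact absurd h hpx'
    · exact h
  exact ((hR x).dotProduct_mulVec_zero_iff w).mp h0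

lemma killall {d : ℕ} (ψ φ : Fin d → ℂ)
    (hψ : star ψ ⬝ᵥ ψ = 1) (hφ : star φ ⬝ᵥ φ = 1)
    (hlt : ‖star ψ ⬝ᵥ φ‖ < 1)
    (A : Matrix (Fin d) (Fin d) ℂ)
    (hkψ : ∀ w, star ψ ⬝ᵥ w = 0 → A *ᵥ w = 0)
    (hkφ : ∀ w, star φ ⬝ᵥ w = 0 → A *ᵥ w = 0) : A = 0 := by
  have hc : ‖star φ ⬝ᵥ ψ‖ = ‖star ψ ⬝ᵥ φ‖ := by
    rw [Matrix.star_dotProduct]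
    exact Complex.norm_conj _
  -- A ψ in terms of A φ
  have h1 : A *ᵥ ψ = (star φ ⬝ᵥ ψ) • (A *ᵥ φ) := by
    have hu : star φ ⬝ᵥ (ψ - (star φ ⬝ᵥ ψ) • φ) = 0 := by
      rw [dotProduct_sub, dotProduct_smul, hφ, smul_eq_mul, mul_one, sub_self]
    have := hkφ _ hu
    rw [Matrix.mulVec_sub, Matrix.mulVec_smul, sub_eq_zero] at this
    exact this
  have h2 : A *ᵥ φ = (star ψ ⬝ᵥ φ) • (A *ᵥ ψ) := by
    have hu : star ψ ⬝ᵥ (φ - (star ψ ⬝ᵥ φ) • ψ) = 0 := by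
      rw [dotProduct_sub, dotProduct_smul, hψ, smul_eq_mul, mul_one, sub_self]
    have := hkψ _ hu
    rw [Matrix.mulVec_sub, Matrix.mulVec_smul, sub_eq_zero] at this
    exact this
  have h3 : A *ᵥ ψ = ((star φ ⬝ᵥ ψ) * (star ψ ⬝ᵥ φ)) • (A *ᵥ ψ) := by
    conv_lhs => rw [h1, h2, smul_smul]
  have hne : (star φ ⬝ᵥ ψ) * (star ψ ⬝ᵥ φ) ≠ 1 := by
    intro hcontra
    have : ‖(star φ ⬝ᵥ ψ) * (star ψ ⬝ᵥ φ)‖ = 1 := by rw [hcontra]; simp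
    rw [norm_mul, hc] at this
    nlinarith [norm_nonneg (star ψ ⬝ᵥ φ)]
  have hAψ : A *ᵥ ψ = 0 := by
    have : (1 - (star φ ⬝ᵥ ψ) * (star ψ ⬝ᵥ φ)) • (A *ᵥ ψ) = 0 := by
      rw [sub_smul, one_smul, ← h3, sub_self]
    rcases smul_eq_zero.mp this with h | h
    · exact absurd (by linear_combination -h) hne
    · exact h
  have hv : ∀ v, A *ᵥ v = 0 := by
    intro v
    have hu : star ψ ⬝ᵥ (v - (star ψ ⬝ᵥ v) • ψ) = 0 := by
      rw [dotProduct_sub, dotProduct_smul, hψ, smul_eq_mul, mul_one, sub_self]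
    have h0 := hkψ _ hu
    rw [Matrix.mulVec_sub, Matrix.mulVec_smul, sub_eq_zero] at h0
    rw [h0, hAψ, smul_zero]
  ext i j
  have := congrFun (hv (Pi.single j 1)) i
  simpa using this

theorem stmt10' {d m : ℕ} (ψ φ : Fin d → ℂ)
    (hψ : star ψ ⬝ᵥ ψ = 1) (hφ : star φ ⬝ᵥ φ = 1)
    (hlt : ‖star ψ ⬝ᵥ φ‖ < 1)
    (R : Fin m → Matrix (Fin d) (Fin d) ℂ) (p q : Fin m → ℝ)
    (hR : ∀ x, (R x).PosSemidef) (htr : ∀ x, (R x).trace = 1)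
    (hp : ∀ x, 0 ≤ p x) (hq : ∀ x, 0 ≤ q x)
    (hrho : ∑ x, (p x : ℂ) • R x = Matrix.vecMulVec ψ (star ψ))
    (hsig : ∑ x, (q x : ℂ) • R x = Matrix.vecMulVec φ (star φ)) :
    ∑ x, Real.sqrt (p x * q x) = 0 := by
  refine Finset.sum_eq_zero fun x _ => ?_
  rcases eq_or_lt_of_le (hp x) with hp0 | hpx
  · rw [← hp0]; simp
  rcases eq_or_lt_of_le (hq x) with hq0 | hqx
  · rw [← hq0]; simp
  exfalso
  have hkψ := fun w hw => kill ψ R p hR hp hrho x hpx w hw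
  have hkφ := fun w hw => kill φ R q hR hq hsig x hqx w hw
  have hA0 := killall ψ φ hψ hφ hlt (R x) hkψ hkφ
  have h1 := htr x
  rw [hA0] at h1
  simp at h1

theorem stmt10 {d m : ℕ} (ψ φ : Fin d → ℂ)
    (hψ : star ψ ⬝ᵥ ψ = 1) (hφ : star φ ⬝ᵥ φ = 1)
    (hlt : ‖star ψ ⬝ᵥ φ‖ < 1)
    (R : Fin m → Matrix (Fin d) (Fin d) ℂ) (p q : Fin m → ℝ)
    (h : IsReverseTest (Matrix.vecMulVec ψ (star ψ)) (Matrix.vecMulVec φ (star φ)) R p q) :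
    ∑ x, Real.sqrt (p x * q x) = 0 :=
  stmt10' ψ φ hψ hφ hlt R p q (fun y => (h.states y).1) (fun y => (h.states y).2)
    h.p_nonneg h.q_nonneg h.rho_eq h.sigma_eq
end
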